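/- Let h(z) = z + Σ_{l≥1} h_l z^{-l} be a monic formal Laurent series and H₊ the span of its Faà di Bruno iterates. For each j ≥ 0 there exists a unique element H^{(j)} ∈ H₊ of the form H^{(j)} = Σ_{l=0}^{j} c_l^j h^{(l)} (with coefficients c_l^j independent of z) having the asymptotic expansion H^{(j)} = z^j + Σ_{k≥1} H^j_k z^{-k} (i.e., no terms in z^m for 0 ≤ m ≤ j−1). -/

import Mathlib

variable {R : Type*} [CommRing R]

/-- Coefficientwise action of `∂_x` on Laurent series. -/
noncomputable def liftD (d : R →+ R) (f : HahnSeries ℤ R) : HahnSeries ℤ R where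
  coeff n := d (f.coeff n)
  isPWO_support' := f.isPWO_support'.mono (by
    intro n hn
    simp only [Function.mem_support] at hn ⊢
    intro h0
    exact hn (by rw [h0, map_zero]))

/-- Faà di Bruno iterates: `h⁽⁰⁾ = 1`, `h⁽ʲ⁺¹⁾ = (∂_x + h)·h⁽ʲ⁾`. -/
noncomputable def fdb (d : R →+ R) (h : HahnSeries ℤ R) : ℕ → HahnSeries ℤ R
  | 0 => 1
  | j + 1 => liftD d (fdb d h j) + h * fdb d h j

lemma mul_coeff_zero_of_lt (x y : HahnSeries ℤ R) (A B : ℤ)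
    (hx : ∀ i < A, x.coeff i = 0) (hy : ∀ i < B, y.coeff i = 0) :
    (∀ n < A + B, (x * y).coeff n = 0) := by
  intro n hn
  rw [HahnSeries.coeff_mul]
  apply Finset.sum_eq_zero
  rintro ⟨i, m⟩ hmem
  rw [Finset.mem_addAntidiagonal] at hmem
  obtain ⟨hi, hm, hs⟩ := hmem
  exfalso
  have h1 : ¬ i < A := fun hlt => hi (hx i hlt)
  have h2 : ¬ m < B := fun hlt => hm (hy m hlt)
  simp only at hs
  omega

lemma mul_coeff_lead (x y : HahnSeries ℤ R) (A B : ℤ)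
    (hx : ∀ i < A, x.coeff i = 0) (hy : ∀ i < B, y.coeff i = 0) :
    (x * y).coeff (A + B) = x.coeff A * y.coeff B := by
  rw [HahnSeries.coeff_mul]
  have hsub : Finset.antidiagonal x.isPWO_support y.isPWO_support (A + B)
      ⊆ {((A : ℤ), (B : ℤ))} := by
    rintro ⟨i, m⟩ hmem
    rw [Finset.mem_antidiagonal] at hmem
    obtain ⟨hi, hm, hs⟩ := hmem
    have h1 : ¬ i < A := fun hlt => hi (hx i hlt)
    have h2 : ¬ m < B := fun hlt => hm (hy m hlt)
    simp only at hs
    simp only [Finset.mem_singleton, Prod.mk.injEq]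
    omega
  rcases Finset.subset_singleton_iff.mp hsub with he | he
  · rw [he, Finset.sum_empty]
    by_contra hne
    have hA : x.coeff A ≠ 0 := fun h0 => hne (by rw [h0, zero_mul])
    have hB : y.coeff B ≠ 0 := fun h0 => hne (by rw [h0, mul_zero])
    have : ((A : ℤ), (B : ℤ)) ∈ Finset.antidiagonal x.isPWO_support
        y.isPWO_support (A + B) := by
      rw [Finset.mem_antidiagonal]
      exact ⟨hA, hB, rfl⟩
    rw [he] at this
    exact absurd this (Finset.notMem_empty _)
  · rw [he, Finset.sum_singleton]

lemma liftD_coeff (d : R →+ R) (f : HahnSeries ℤ R) (n : ℤ) :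
    (liftD d f).coeff n = d (f.coeff n) := rfl

lemma fdb_coeff (d : R →+ R) (h : HahnSeries ℤ R)
    (h_monic : h.coeff (-1) = 1 ∧ h.coeff 0 = 0 ∧ ∀ n : ℤ, n < -1 → h.coeff n = 0)
    (l : ℕ) :
    (∀ n : ℤ, n < -(l : ℤ) → (fdb d h l).coeff n = 0) ∧
      (fdb d h l).coeff (-(l : ℤ)) = 1 := by
  induction l with
  | zero =>
    constructor
    · intro n hn
      show (1 : HahnSeries ℤ R).coeff n = 0
      rw [HahnSeries.coeff_one, if_neg (by omega)]
    · show (1 : HahnSeries ℤ R).coeff 0 = 1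
      rw [HahnSeries.coeff_one, if_pos rfl]
  | succ l ih =>
    obtain ⟨ih0, ih1⟩ := ih
    have hh : ∀ i < (-1 : ℤ), h.coeff i = 0 := h_monic.2.2
    have hmul0 := mul_coeff_zero_of_lt h (fdb d h l) (-1) (-(l : ℤ)) hh ih0
    have hmul1 := mul_coeff_lead h (fdb d h l) (-1) (-(l : ℤ)) hh ih0
    have hAB : (-1 : ℤ) + -(l : ℤ) = -((l + 1 : ℕ) : ℤ) := by push_cast; ring
    constructor
    · intro n hn
      show (liftD d (fdb d h l)).coeff n + (h * fdb d h l).coeff n = 0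
      rw [liftD_coeff, ih0 n (by push_cast at hn ⊢; omega),
        hmul0 n (by omega), map_zero, add_zero]
    · show (liftD d (fdb d h l)).coeff (-((l+1 : ℕ) : ℤ))
        + (h * fdb d h l).coeff (-((l+1 : ℕ) : ℤ)) = 1
      rw [liftD_coeff, ih0 _ (by push_cast; omega), map_zero, zero_add, ← hAB,
        hmul1, h_monic.1, ih1, one_mul]

/-- Solve the unitriangular system downwards from `c j = 1`. -/
noncomputable def solveC (M : ℕ → ℕ → R) (j : ℕ) : ℕ → R
  | k =>
    if k = j then 1
    else if hk : k < j then
      -∑ l ∈ (Finset.Ico (k + 1) (j + 1)).attach, solveC M j l.1 * M l.1 k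
    else 0
  termination_by k => j - k
  decreasing_by
    have := l.2
    rw [Finset.mem_Ico] at this
    omega

lemma solveC_self (M : ℕ → ℕ → R) (j : ℕ) : solveC M j j = 1 := by
  rw [solveC, if_pos rfl]

lemma coeff_sum (s : Finset ℕ) (f : ℕ → HahnSeries ℤ R) (n : ℤ) :
    (∑ l ∈ s, f l).coeff n = ∑ l ∈ s, (f l).coeff n :=
  map_sum (HahnSeries.coeff.addMonoidHom n) f s

lemma solveC_lt (M : ℕ → ℕ → R) (j k : ℕ) (hk : k < j) :
    solveC M j k = -∑ l ∈ Finset.Ico (k + 1) (j + 1), solveC M j l * M l k := by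
  rw [solveC, if_neg (by omega), dif_pos hk]
  congr 1
  exact Finset.sum_attach _ (fun l => solveC M j l * M l k)

theorem current_exists_unique (d : R →+ R)
    (hd : ∀ a b : R, d (a * b) = d a * b + a * d b)
    (h : HahnSeries ℤ R)
    (h_monic : h.coeff (-1) = 1 ∧ h.coeff 0 = 0 ∧ ∀ n : ℤ, n < -1 → h.coeff n = 0)
    (j : ℕ) :
    ∃! H : HahnSeries ℤ R,
      (∃ c : ℕ → R, H = ∑ l ∈ Finset.range (j + 1), c l • fdb d h l) ∧
      H.coeff (-(j : ℤ)) = 1 ∧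
      (∀ n : ℤ, n < -(j : ℤ) → H.coeff n = 0) ∧
      (∀ n : ℤ, -(j : ℤ) < n → n ≤ 0 → H.coeff n = 0) := by
  set M : ℕ → ℕ → R := fun l k => (fdb d h l).coeff (-(k : ℤ)) with hM
  have key := fdb_coeff d h h_monic
  -- coefficient of a combination at -k for k ≤ j
  have comb : ∀ (c : ℕ → R) (k : ℕ), k ≤ j →
      (∑ l ∈ Finset.range (j + 1), c l • fdb d h l).coeff (-(k : ℤ)) =
        c k + ∑ l ∈ Finset.Ico (k + 1) (j + 1), c l * M l k := by
    intro c k hk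
    have hcoeff : (∑ l ∈ Finset.range (j + 1), c l • fdb d h l).coeff (-(k : ℤ))
        = ∑ l ∈ Finset.range (j + 1), c l * M l k := by
      rw [coeff_sum]
      exact Finset.sum_congr rfl fun l _ => by
          rw [HahnSeries.coeff_smul, smul_eq_mul]
    rw [hcoeff, Finset.range_eq_Ico,
      ← Finset.sum_Ico_consecutive _ (Nat.zero_le (k + 1)) (by omega),
      ← Finset.range_eq_Ico, Finset.sum_range_succ]
    have hz : ∑ l ∈ Finset.range k, c l * M l k = 0 := by
      apply Finset.sum_eq_zero
      intro l hl
      rw [Finset.mem_range] at hl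
      rw [hM]
      simp only
      rw [(key l).1 (-(k : ℤ)) (by omega), mul_zero]
    have hMkk : M k k = 1 := (key k).2
    rw [hz, zero_add, hMkk, mul_one, add_comm]
  set c : ℕ → R := solveC M j with hc
  refine ⟨∑ l ∈ Finset.range (j + 1), c l • fdb d h l, ⟨⟨c, rfl⟩, ?_, ?_, ?_⟩, ?_⟩
  · rw [comb c j le_rfl, hc, solveC_self, Finset.Ico_self, Finset.sum_empty, add_zero]
  · intro n hn
    rw [coeff_sum]
    apply Finset.sum_eq_zero
    intro l hl
    rw [Finset.mem_range] at hl
    rw [HahnSeries.coeff_smul, (key l).1 n (by omega), smul_zero]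
  · intro n hn1 hn2
    set k : ℕ := (-n).toNat with hk
    have hnk : n = -(k : ℤ) := by omega
    have hkj : k < j := by omega
    rw [hnk, comb c k hkj.le, hc, solveC_lt M j k hkj, neg_add_cancel]
  · rintro H ⟨⟨c', rfl⟩, hlead, _, hmid⟩
    have agree : ∀ i k, j - k = i → k ≤ j → c' k = c k := by
      intro i
      induction i using Nat.strong_induction_on with
      | _ i ih =>
        intro k hik hkj
        have hsum : ∑ l ∈ Finset.Ico (k + 1) (j + 1), c' l * M l k
            = ∑ l ∈ Finset.Ico (k + 1) (j + 1), c l * M l k := by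
          apply Finset.sum_congr rfl
          intro l hl
          rw [Finset.mem_Ico] at hl
          rw [ih (j - l) (by omega) l rfl (by omega)]
        rcases eq_or_lt_of_le hkj with heq | hlt
        · subst heq
          have := hlead
          rw [comb c' k le_rfl, Finset.Ico_self, Finset.sum_empty, add_zero] at this
          rw [this, hc, solveC_self]
        · have h0 := hmid (-(k : ℤ)) (by omega) (by omega)
          rw [comb c' k hkj] at h0
          have : c' k = -∑ l ∈ Finset.Ico (k + 1) (j + 1), c l * M l k :=
            eq_neg_of_add_eq_zero_left (hsum ▸ h0)
          rw [this, hc, solveC_lt M j k hlt]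
    apply Finset.sum_congr rfl
    intro l hl
    rw [Finset.mem_range] at hl
    rw [agree (j - l) l rfl (by omega)]
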